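/- The negative part of log|f′| is not integrable with respect to μ̃_P: ∫ max{0, −log|f′(x)|} dμ̃_P(x) = +∞. Combined with the divergence ∫ max{0, log|f′(x)|} dμ̃_P(x) = +∞, this shows that the Lyapunov exponent χ_{μ̃_P}(f) = ∫ log|f′| dμ̃_P is not defined, even as a value in [−∞, +∞]. -/

import Mathlib

open MeasureTheory Filter Set
open scoped ENNReal

structure TentSetup where
  lam : ℝ
  T : ℝ → ℝ
  c : ℕ → ℝ
  s : ℕ → ℕ
  hlam1 : 1 < lam
  hlam2 : lam < 2
  hT : ∀ x, T x = lam * (1 - |x|) - 1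
  hc0 : c 0 = 0
  hcs : ∀ n, c (n + 1) = T (c n)
  hs0 : s 0 = 1
  hs1 : s 1 = 2
  hsrec : ∀ m, s (m + 2) = s (m + 1) + s m
  hcne : ∀ j, 1 ≤ j → c j ≠ 0
  hsame : ∀ m j, 1 ≤ j → j < s m → (0 < c (s (m + 1) + j) ↔ 0 < c j)
  hopp : ∀ m, (0 < c (s (m + 2)) ↔ c (s m) < 0)
  hdec : ∀ m, |c (s (m + 1))| < |c (s m)|

namespace TentSetup
variable (st : TentSetup)

noncomputable def b (m : ℕ) : ℝ := |st.c (st.s m)|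

lemma lam_pos : 0 < st.lam := lt_trans one_pos st.hlam1

lemma s_pos : ∀ m, 1 ≤ st.s m := by
  intro m
  induction m using Nat.strong_induction_on with
  | _ m ih =>
    match m with
    | 0 => simp [st.hs0]
    | 1 => simp [st.hs1]
    | (k+2) =>
      have h1 := ih (k+1) (by omega)
      rw [st.hsrec]; omega

lemma s_ge : ∀ m, m + 1 ≤ st.s m := by
  intro m
  induction m using Nat.strong_induction_on with
  | _ m ih =>
    match m with
    | 0 => simp [st.hs0]
    | 1 => simp [st.hs1]
    | (k+2) =>
      have h1 := ih (k+1) (by omega)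
      have h2 := st.s_pos k
      rw [st.hsrec]; omega

lemma s_lt (m : ℕ) : st.s m < st.s (m+1) := by
  match m with
  | 0 => rw [st.hs0, st.hs1]; omega
  | (k+1) => have := st.s_pos k; rw [st.hsrec]; omega

lemma s_mono : Monotone st.s :=
  monotone_nat_of_le_succ (fun n => le_of_lt (st.s_lt n))

lemma s_le2 (m : ℕ) : st.s (m+1) ≤ 2 * st.s m := by
  match m with
  | 0 => rw [st.hs0, st.hs1]
  | (k+1) => have := st.s_mono (show k ≤ k+1 by omega); rw [st.hsrec]; omega

lemma c_eq_iter : ∀ n, st.c n = st.T^[n] 0 := by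
  intro n
  induction n with
  | zero => simpa using st.hc0
  | succ k ih => rw [st.hcs, ih, Function.iterate_succ_apply']

lemma b_pos (m : ℕ) : 0 < st.b m := abs_pos.2 (st.hcne _ (st.s_pos m))

lemma b_succ_lt (m : ℕ) : st.b (m+1) < st.b m := st.hdec m

lemma b_anti : Antitone st.b :=
  antitone_nat_of_succ_le (fun n => le_of_lt (st.b_succ_lt n))

lemma T_eq_nonneg {x : ℝ} (hx : 0 ≤ x) : st.T x = st.lam * (1 - x) - 1 := by
  rw [st.hT, abs_of_nonneg hx]

lemma T_eq_nonpos {x : ℝ} (hx : x ≤ 0) : st.T x = st.lam * (1 + x) - 1 := by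
  rw [st.hT, abs_of_nonpos hx]; ring

lemma T_mem {p q x : ℝ} (hside : (0 ≤ p ∧ 0 ≤ q) ∨ (p ≤ 0 ∧ q ≤ 0))
    (hx : x ∈ uIcc p q) : st.T x ∈ uIcc (st.T p) (st.T q) := by
  have hl := st.lam_pos
  rw [Set.mem_uIcc] at hx
  rw [Set.mem_uIcc]
  rcases hx with ⟨h1, h2⟩ | ⟨h1, h2⟩ <;> rcases hside with ⟨hp, hq⟩ | ⟨hp, hq⟩
  · have hx0 : 0 ≤ x := le_trans hp h1
    rw [st.T_eq_nonneg hp, st.T_eq_nonneg hq, st.T_eq_nonneg hx0]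
    right; constructor <;> nlinarith
  · have hx0 : x ≤ 0 := le_trans h2 hq
    rw [st.T_eq_nonpos hp, st.T_eq_nonpos hq, st.T_eq_nonpos hx0]
    left; constructor <;> nlinarith
  · have hx0 : 0 ≤ x := le_trans hq h1
    rw [st.T_eq_nonneg hp, st.T_eq_nonneg hq, st.T_eq_nonneg hx0]
    left; constructor <;> nlinarith
  · have hx0 : x ≤ 0 := le_trans h2 hp
    rw [st.T_eq_nonpos hp, st.T_eq_nonpos hq, st.T_eq_nonpos hx0]
    right; constructor <;> nlinarith

lemma T_dist {p q : ℝ} (hside : (0 ≤ p ∧ 0 ≤ q) ∨ (p ≤ 0 ∧ q ≤ 0)) :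
    |st.T p - st.T q| = st.lam * |p - q| := by
  have hl := st.lam_pos
  rcases hside with ⟨hp, hq⟩ | ⟨hp, hq⟩
  · have : st.T p - st.T q = st.lam * (q - p) := by
      rw [st.T_eq_nonneg hp, st.T_eq_nonneg hq]; ring
    rw [this, abs_mul, abs_of_pos hl, abs_sub_comm]
  · have : st.T p - st.T q = st.lam * (p - q) := by
      rw [st.T_eq_nonpos hp, st.T_eq_nonpos hq]; ring
    rw [this, abs_mul, abs_of_pos hl]

lemma side (m i : ℕ) (h1 : 1 ≤ i) (h2 : i < st.s m) :
    (0 ≤ st.c i ∧ 0 ≤ st.c (st.s (m+1) + i)) ∨ (st.c i ≤ 0 ∧ st.c (st.s (m+1) + i) ≤ 0) := by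
  have hne1 := st.hcne i h1
  have hne2 := st.hcne (st.s (m+1) + i) (by have := st.s_pos (m+1); omega)
  have hiff := st.hsame m i h1 h2
  rcases lt_or_gt_of_ne hne1 with hneg | hpos
  · right
    refine ⟨le_of_lt hneg, ?_⟩
    by_contra hp
    push_neg at hp
    exact absurd (hiff.1 hp) (by linarith)
  · exact Or.inl ⟨le_of_lt hpos, le_of_lt (hiff.2 hpos)⟩

lemma iter_mem (m : ℕ) {y : ℝ} (hy : y ∈ uIcc 0 (st.c (st.s (m+1)))) :
    ∀ i, 1 ≤ i → i ≤ st.s m → st.T^[i] y ∈ uIcc (st.c i) (st.c (st.s (m+1) + i)) := by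
  intro i
  induction i with
  | zero => omega
  | succ n ih =>
    intro _ hle
    rcases Nat.eq_zero_or_pos n with rfl | hn
    · have hside : ((0:ℝ) ≤ 0 ∧ 0 ≤ st.c (st.s (m+1))) ∨ ((0:ℝ) ≤ 0 ∧ st.c (st.s (m+1)) ≤ 0) := by
        rcases le_or_gt 0 (st.c (st.s (m+1))) with h | h
        · exact Or.inl ⟨le_rfl, h⟩
        · exact Or.inr ⟨le_rfl, le_of_lt h⟩
      have hside' : ((0:ℝ) ≤ 0 ∧ 0 ≤ st.c (st.s (m+1))) ∨ ((0:ℝ) ≤ 0 ∧ st.c (st.s (m+1)) ≤ 0) → 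
          (0 ≤ (0:ℝ) ∧ 0 ≤ st.c (st.s (m+1))) ∨ ((0:ℝ) ≤ 0 ∧ st.c (st.s (m+1)) ≤ 0) := id
      have hmem := st.T_mem (p := 0) (q := st.c (st.s (m+1))) (hside' hside) hy
      have e0 : st.T 0 = st.c 1 := by rw [← st.hc0] ; exact (st.hcs 0).symm
      have e1 : st.T (st.c (st.s (m+1))) = st.c (st.s (m+1) + 1) := (st.hcs _).symm
      rw [e0, e1] at hmem
      simpa using hmem
    · have hmem := ih hn (by omega)
      have hside := st.side m n hn (by omega)
      have hmem2 := st.T_mem hside hmem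
      rw [Function.iterate_succ_apply']
      have hidx : st.s (m+1) + (n+1) = (st.s (m+1) + n) + 1 := by omega
      rw [hidx, st.hcs, st.hcs]
      exact hmem2

lemma abs_le_of_mem_uIcc' {p q z : ℝ} (hz : z ∈ uIcc p q) : |z| ≤ max |p| |q| := by
  rcases Set.mem_uIcc.1 hz with ⟨h1, h2⟩ | ⟨h1, h2⟩
  · exact abs_le_max_abs_abs h1 h2
  · exact le_trans (abs_le_max_abs_abs h1 h2) (le_of_eq (max_comm _ _))

lemma step (m : ℕ) {x : ℝ} (hx : |x| ≤ st.b (m+1)) : |st.T^[st.s m] x| ≤ st.b m := by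
  set q := st.c (st.s (m+1)) with hq
  have hbq : st.b (m+1) = |q| := rfl
  set y : ℝ := if 0 ≤ q then |x| else -|x| with hy
  have habs : |y| = |x| := by
    by_cases h : 0 ≤ q <;> simp [hy, h, abs_abs]
  have hmemy : y ∈ uIcc 0 q := by
    rw [Set.mem_uIcc]
    by_cases h : 0 ≤ q
    · left
      refine ⟨by simp [hy, h, abs_nonneg], ?_⟩
      rw [hy, if_pos h]
      calc |x| ≤ st.b (m+1) := hx
      _ = |q| := rfl
      _ = q := abs_of_nonneg h
    · right
      push_neg at h
      refine ⟨?_, by rw [hy, if_neg h.not_ge]; simp [abs_nonneg]⟩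
      rw [hy, if_neg h.not_ge]
      have : |x| ≤ -q := by
        calc |x| ≤ st.b (m+1) := hx
        _ = |q| := rfl
        _ = -q := abs_of_neg h
      linarith
  have hiter : st.T^[st.s m] x = st.T^[st.s m] y := by
    obtain ⟨k, hk⟩ : ∃ k, st.s m = k + 1 := ⟨st.s m - 1, by have := st.s_pos m; omega⟩
    have hTxy : st.T x = st.T y := by rw [st.hT, st.hT, habs]
    rw [hk, Function.iterate_succ_apply, Function.iterate_succ_apply, hTxy]
  have hmem := st.iter_mem m hmemy (st.s m) (st.s_pos m) le_rfl
  have hidx : st.s (m+1) + st.s m = st.s (m+2) := by rw [st.hsrec]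
  rw [hidx] at hmem
  rw [hiter]
  refine le_trans (abs_le_of_mem_uIcc' hmem) ?_
  have h2 : st.b (m+2) ≤ st.b m := st.b_anti (by omega)
  exact max_le le_rfl h2

lemma iter_dist (m : ℕ) :
    ∀ i, 1 ≤ i → i ≤ st.s m → |st.c i - st.c (st.s (m+1) + i)| = st.lam ^ i * st.b (m+1) := by
  intro i
  induction i with
  | zero => omega
  | succ n ih =>
    intro _ hle
    rcases Nat.eq_zero_or_pos n with rfl | hn
    · have hside : ((0:ℝ) ≤ 0 ∧ 0 ≤ st.c (st.s (m+1))) ∨ ((0:ℝ) ≤ 0 ∧ st.c (st.s (m+1)) ≤ 0) := by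
        rcases le_or_gt 0 (st.c (st.s (m+1))) with h | h
        · exact Or.inl ⟨le_rfl, h⟩
        · exact Or.inr ⟨le_rfl, le_of_lt h⟩
      have hd := st.T_dist (p := 0) (q := st.c (st.s (m+1))) hside
      have e0 : st.T 0 = st.c 1 := by rw [← st.hc0]; exact (st.hcs 0).symm
      have e1 : st.T (st.c (st.s (m+1))) = st.c (st.s (m+1) + 1) := (st.hcs _).symm
      rw [e0, e1] at hd
      rw [hd]
      simp [b, abs_sub_comm]
    · have hih := ih hn (by omega)
      have hside := st.side m n hn (by omega)
      have hd := st.T_dist hside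
      have hidx : st.s (m+1) + (n+1) = (st.s (m+1) + n) + 1 := by omega
      rw [hidx, st.hcs, st.hcs, hd, hih, pow_succ]
      ring

lemma ident (m : ℕ) : st.b m + st.b (m+2) = st.lam ^ (st.s m) * st.b (m+1) := by
  have hd := st.iter_dist m (st.s m) (st.s_pos m) le_rfl
  rw [show st.s (m+1) + st.s m = st.s (m+2) from by rw [st.hsrec]] at hd
  have h1 := st.hcne (st.s m) (st.s_pos m)
  have h2 := st.hcne (st.s (m+2)) (st.s_pos _)
  have hiff := st.hopp m
  rw [← hd]
  rcases lt_or_gt_of_ne h1 with hneg | hpos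
  · have hp2 : 0 < st.c (st.s (m+2)) := hiff.2 hneg
    rw [show st.b m = -(st.c (st.s m)) from abs_of_neg hneg,
        show st.b (m+2) = st.c (st.s (m+2)) from abs_of_pos hp2,
        abs_of_neg (by linarith : st.c (st.s m) - st.c (st.s (m+2)) < 0)]
    ring
  · have hn2 : st.c (st.s (m+2)) < 0 := by
      by_contra hp
      push_neg at hp
      have : 0 < st.c (st.s (m+2)) := lt_of_le_of_ne hp (Ne.symm h2)
      exact absurd (hiff.1 this) (by linarith)
    rw [show st.b m = st.c (st.s m) from abs_of_pos hpos,
        show st.b (m+2) = -(st.c (st.s (m+2))) from abs_of_neg hn2,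
        abs_of_pos (by linarith : 0 < st.c (st.s m) - st.c (st.s (m+2)))]
    ring

lemma b_lower (m : ℕ) : st.b (m+1) * (st.lam ^ (st.s m) - 1) ≤ st.b m := by
  have h := st.ident m
  have h2 : st.b (m+2) ≤ st.b (m+1) := le_of_lt (st.b_succ_lt (m+1))
  nlinarith [st.b_pos (m+1)]

lemma b_upper (m : ℕ) : st.lam ^ (st.s m) * st.b (m+1) ≤ 2 * st.b m := by
  have h := st.ident m
  have h2 : st.b (m+2) ≤ st.b m := st.b_anti (by omega)
  linarith

lemma b_small {η : ℝ} (hη : 0 < η) : ∃ m, st.b m < η := by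
  obtain ⟨n, hn⟩ := pow_unbounded_of_one_lt (2 * st.b 0 / η) st.hlam1
  refine ⟨n + 1, ?_⟩
  have h1 : st.lam ^ (st.s n) * st.b (n+1) ≤ 2 * st.b n := st.b_upper n
  have h2 : st.b n ≤ st.b 0 := st.b_anti (by omega)
  have h3 : st.lam ^ n ≤ st.lam ^ (st.s n) :=
    pow_le_pow_right₀ (le_of_lt st.hlam1) (by have := st.s_ge n; omega)
  have h4 : (0:ℝ) < st.lam ^ n := pow_pos st.lam_pos _
  have h5 : st.lam ^ n * st.b (n+1) ≤ 2 * st.b 0 := by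
    nlinarith [st.b_pos (n+1)]
  have h6 : 2 * st.b 0 / η < st.lam ^ n := hn
  have hb := st.b_pos (n+1)
  rw [div_lt_iff₀ hη] at h6
  nlinarith

end TentSetup

inductive Fgood (s : ℕ → ℕ) : ℕ → ℕ → Prop
  | zero (m : ℕ) : Fgood s m 0
  | cons (m k n : ℕ) (hk : m ≤ k) (hn : Fgood s (k + 2) n) : Fgood s m (s k + n)

lemma Fgood.mono {s : ℕ → ℕ} {m n : ℕ} (h : Fgood s m n) {m' : ℕ} (hm : m' ≤ m) :
    Fgood s m' n := by
  cases h with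
  | zero => exact .zero m'
  | cons m k n hk hn => exact .cons m' k n (le_trans hm hk) hn

namespace TentSetup
variable (st : TentSetup)

lemma carry : ∀ n k, Fgood st.s (k+2) n → Fgood st.s (k+1) (st.s (k+1) + n) := by
  intro n
  induction n using Nat.strong_induction_on with
  | _ n ih =>
    intro k hg
    cases hg with
    | zero => exact Fgood.cons (k+1) (k+1) 0 le_rfl (Fgood.zero _)
    | cons _ l n' hl hn' =>
      rcases eq_or_lt_of_le hl with heq | hlt
      · subst heq
        have hidx : st.s (k+1) + (st.s (k+2) + n') = st.s (k+3) + n' := by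
          have hr : st.s (k+3) = st.s (k+2) + st.s (k+1) := st.hsrec (k+1)
          omega
        rw [hidx]
        have h1 : Fgood st.s (k+3) (st.s (k+3) + n') :=
          ih n' (by have := st.s_pos (k+2); omega) (k+2) hn'
        exact h1.mono (by omega)
      · exact Fgood.cons (k+1) (k+1) _ le_rfl (Fgood.cons (k+3) l n' (by omega) hn')

lemma good_succ (m n : ℕ) (h : Fgood st.s m n) :
    ∃ d, 1 ≤ d ∧ d ≤ st.s (m+1) ∧ Fgood st.s m (n + d) := by
  cases h with
  | zero =>
    refine ⟨st.s m, st.s_pos m, le_of_lt (st.s_lt m), ?_⟩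
    have : Fgood st.s m (st.s m + 0) := Fgood.cons m m 0 le_rfl (Fgood.zero _)
    simpa using this
  | cons _ k n' hk hn' =>
    rcases lt_or_ge k (m+2) with hk2 | hk2
    · have hkm : k = m ∨ k = m + 1 := by omega
      rcases hkm with hkm | hkm
      · subst hkm
        refine ⟨st.s (k+1) - st.s k, by have := st.s_lt k; omega, by omega, ?_⟩
        have hidx : (st.s k + n') + (st.s (k+1) - st.s k) = st.s (k+1) + n' := by
          have := st.s_lt k; omega
        rw [hidx]
        exact (st.carry n' k hn').mono (by omega)
      · subst hkm
        refine ⟨st.s m, st.s_pos m, le_of_lt (st.s_lt m), ?_⟩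
        have hidx : (st.s (m+1) + n') + st.s m = st.s (m+2) + n' := by
          have := st.hsrec m; omega
        rw [hidx]
        exact (st.carry n' (m+1) hn').mono (by omega)
    · refine ⟨st.s m, st.s_pos m, le_of_lt (st.s_lt m), ?_⟩
      have hidx : (st.s k + n') + st.s m = st.s m + (st.s k + n') := by omega
      rw [hidx]
      exact Fgood.cons m m _ le_rfl (Fgood.cons (m+2) k n' hk2 hn')

lemma good_syndetic (m j : ℕ) : ∃ n, Fgood st.s m n ∧ j ≤ n ∧ n ≤ j + st.s (m+1) := by
  induction j with
  | zero => exact ⟨0, .zero m, le_rfl, by omega⟩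
  | succ i ih =>
    obtain ⟨n, hg, h1, h2⟩ := ih
    rcases lt_or_ge i n with h | h
    · exact ⟨n, hg, by omega, by omega⟩
    · have hn : n = i := le_antisymm h h1
      subst hn
      obtain ⟨d, hd1, hd2, hgd⟩ := st.good_succ m n hg
      exact ⟨n + d, hgd, by omega, by omega⟩

lemma good_bound (m n : ℕ) (h : Fgood st.s m n) : |st.c n| ≤ st.b m := by
  induction h with
  | zero m => rw [st.hc0, abs_zero]; exact le_of_lt (st.b_pos m)
  | cons m k n hk hn ih =>
    have h1 : |st.c n| ≤ st.b (k+1) := le_trans ih (st.b_anti (by omega))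
    have h2 : st.c (st.s k + n) = st.T^[st.s k] (st.c n) := by
      rw [st.c_eq_iter n, st.c_eq_iter (st.s k + n), Function.iterate_add_apply]
    rw [h2]
    exact le_trans (st.step k h1) (st.b_anti hk)

lemma T_cont : Continuous st.T := by
  have : st.T = fun x => st.lam * (1 - |x|) - 1 := funext st.hT
  rw [this]; continuity

lemma meas_ball (μ : Measure ℝ) [IsProbabilityMeasure μ] (hinvar : Measure.map st.T μ = μ)
    (hsupp : μ (closure {y : ℝ | ∃ n : ℕ, st.T^[n] 0 = y})ᶜ = 0) (m : ℕ) :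
    (↑(st.s (m+1) + 1) : ℝ≥0∞)⁻¹ ≤ μ (Icc (-(st.b m)) (st.b m)) := by
  have hTc : Continuous st.T := st.T_cont
  have hTm : Measurable st.T := hTc.measurable
  set B := Icc (-(st.b m)) (st.b m) with hB
  have hBm : MeasurableSet B := measurableSet_Icc
  have hpre : ∀ i : ℕ, μ ((st.T^[i]) ⁻¹' B) = μ B := by
    intro i
    induction i with
    | zero => simp
    | succ n ihn =>
      have hset : (st.T^[n+1]) ⁻¹' B = st.T ⁻¹' ((st.T^[n]) ⁻¹' B) := by
        ext x
        simp [Function.iterate_succ_apply]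
      rw [hset, ← Measure.map_apply hTm ((hTm.iterate n) hBm), hinvar, ihn]
  set N := st.s (m+1) + 1 with hN
  set X := {y : ℝ | ∃ n : ℕ, st.T^[n] 0 = y} with hX
  have hcover : closure X ⊆ ⋃ i ∈ Finset.range N, (st.T^[i]) ⁻¹' B := by
    apply closure_minimal
    · rintro y ⟨j, rfl⟩
      obtain ⟨n, hg, h1, h2⟩ := st.good_syndetic m j
      refine Set.mem_biUnion (Finset.mem_range.2 (show n - j < N by omega)) ?_
      show st.T^[n - j] (st.T^[j] 0) ∈ B
      rw [← Function.iterate_add_apply, (show n - j + j = n by omega)]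
      have hbd := st.good_bound m n hg
      rw [st.c_eq_iter n] at hbd
      rw [hB, Set.mem_Icc]
      exact abs_le.1 hbd
    · apply Set.Finite.isClosed_biUnion (Finset.finite_toSet _)
      intro i _
      exact IsClosed.preimage (hTc.iterate i) isClosed_Icc
  have hμX : μ (closure X) = 1 := by
    have h := measure_add_measure_compl (μ := μ) (measurableSet_closure (s := X))
    rw [hsupp, add_zero, measure_univ] at h
    exact h
  have h1 : (1:ℝ≥0∞) ≤ ∑ i ∈ Finset.range N, μ ((st.T^[i]) ⁻¹' B) := by
    calc (1:ℝ≥0∞) = μ (closure X) := hμX.symm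
    _ ≤ μ (⋃ i ∈ Finset.range N, (st.T^[i]) ⁻¹' B) := measure_mono hcover
    _ ≤ ∑ i ∈ Finset.range N, μ ((st.T^[i]) ⁻¹' B) := measure_biUnion_finset_le _ _
  have h2 : (1:ℝ≥0∞) ≤ (N : ℝ≥0∞) * μ B := by
    calc (1:ℝ≥0∞) ≤ ∑ i ∈ Finset.range N, μ ((st.T^[i]) ⁻¹' B) := h1
    _ = ∑ _i ∈ Finset.range N, μ B := Finset.sum_congr rfl (fun i _ => hpre i)
    _ = (N : ℝ≥0∞) * μ B := by rw [Finset.sum_const, Finset.card_range, nsmul_eq_mul]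
  have hN0 : (N : ℝ≥0∞) ≠ 0 := by simp [hN]
  have hNt : (N : ℝ≥0∞) ≠ ⊤ := ENNReal.natCast_ne_top N
  calc (N : ℝ≥0∞)⁻¹ = (N : ℝ≥0∞)⁻¹ * 1 := (mul_one _).symm
  _ ≤ (N : ℝ≥0∞)⁻¹ * ((N : ℝ≥0∞) * μ B) := mul_le_mul_right h2 _
  _ = μ B := by rw [← mul_assoc, ENNReal.inv_mul_cancel hN0 hNt, one_mul]

end TentSetup

namespace TentSetup
variable (st : TentSetup)

lemma log_b_anti {i j : ℕ} (hij : i ≤ j) : Real.log (st.b j) ≤ Real.log (st.b i) :=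
  Real.log_le_log (st.b_pos j) (st.b_anti hij)

lemma log_ratio (m : ℕ) (hm : 1 ≤ m) :
    (st.s m : ℝ) * Real.log st.lam + Real.log (1 - st.lam⁻¹ ^ 2)
      ≤ Real.log (st.b m) - Real.log (st.b (m+1)) := by
  have hl1 := st.hlam1
  have hlp := st.lam_pos
  have hinv2 : (0:ℝ) < 1 - st.lam⁻¹ ^ 2 := by
    have h1 : st.lam⁻¹ < 1 := inv_lt_one_of_one_lt₀ hl1
    have h0 : 0 < st.lam⁻¹ := inv_pos.2 hlp
    nlinarith
  have hs2 : 2 ≤ st.s m := by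
    have := st.s_mono hm
    rw [st.hs1] at this
    omega
  have hkey : (1 - st.lam⁻¹ ^ 2) * st.lam ^ (st.s m) ≤ st.lam ^ (st.s m) - 1 := by
    have hsplit : st.lam ^ (st.s m) = st.lam ^ 2 * st.lam ^ (st.s m - 2) := by
      rw [← pow_add]; congr 1; omega
    have h1 : (1:ℝ) ≤ st.lam ^ (st.s m - 2) := by
      calc (1:ℝ) = 1 ^ (st.s m - 2) := (one_pow _).symm
      _ ≤ st.lam ^ (st.s m - 2) := pow_le_pow_left₀ zero_le_one (le_of_lt hl1) _
    have h2 : st.lam⁻¹ ^ 2 * st.lam ^ (st.s m) = st.lam ^ (st.s m - 2) := by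
      rw [hsplit, ← mul_assoc, ← mul_pow, inv_mul_cancel₀ (ne_of_gt hlp), one_pow, one_mul]
    nlinarith
  have hb1 := st.b_pos m
  have hb2 := st.b_pos (m+1)
  have hlow := st.b_lower m
  have hquot : (1 - st.lam⁻¹ ^ 2) * st.lam ^ (st.s m) * st.b (m+1) ≤ st.b m := by
    nlinarith [pow_pos hlp (st.s m)]
  have hlog := Real.log_le_log (by positivity) hquot
  rw [Real.log_mul (by positivity) (ne_of_gt hb2),
      Real.log_mul (ne_of_gt hinv2) (by positivity), Real.log_pow] at hlog
  linarith

lemma psi_top (μ : Measure ℝ) [IsProbabilityMeasure μ]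
    (hinvar : Measure.map st.T μ = μ)
    (hsupp : μ (closure {y : ℝ | ∃ n : ℕ, st.T^[n] 0 = y})ᶜ = 0)
    (hatom : μ {(0:ℝ)} = 0)
    (α₀ C₁ r : ℝ) (hα : 0 < α₀) (hr : 0 < r) :
    ∫⁻ v, (if |v| ≤ r then ENNReal.ofReal (α₀ * (-Real.log |v|) - C₁) else 0) ∂μ = ⊤ := by
  have hl1 := st.hlam1
  set a := Real.log st.lam with ha_def
  have ha : 0 < a := Real.log_pos hl1
  set c₂ : ℝ := -Real.log (1 - st.lam⁻¹ ^ 2) with hc₂_def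
  -- choice of k₀
  obtain ⟨m₀, hm₀⟩ := st.b_small (η := min r (Real.exp (-C₁ / α₀))) (by positivity)
  set k₀ := m₀ + 1 with hk₀_def
  have hbk₀ : st.b k₀ < min r (Real.exp (-C₁ / α₀)) :=
    lt_of_le_of_lt (st.b_anti (by omega)) hm₀
  have hbk₀r : st.b k₀ ≤ r := le_of_lt (lt_of_lt_of_le hbk₀ (min_le_left _ _))
  have hbk₀C : α₀ * Real.log (st.b k₀) ≤ -C₁ := by
    have h1 : Real.log (st.b k₀) ≤ -C₁ / α₀ := by
      have := Real.log_le_log (st.b_pos k₀)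
        (le_of_lt (lt_of_lt_of_le hbk₀ (min_le_right _ _)))
      rwa [Real.log_exp] at this
    calc α₀ * Real.log (st.b k₀) ≤ α₀ * (-C₁ / α₀) :=
          mul_le_mul_of_nonneg_left h1 (le_of_lt hα)
    _ = -C₁ := by rw [mul_comm]; exact div_mul_cancel₀ (-C₁) hα.ne'
  -- the layered functions
  set w : ℕ → ℝ≥0∞ := fun k =>
    ENNReal.ofReal (α₀ * (Real.log (st.b (k₀+k)) - Real.log (st.b (k₀+k+1)))) with hw_def
  set F : ℕ → ℝ → ℝ≥0∞ := fun k =>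
    (Icc (-(st.b (k₀+1+k))) (st.b (k₀+1+k))).indicator (fun _ => w k) with hF_def
  have hFmeas : ∀ k, Measurable (F k) := fun k =>
    measurable_const.indicator measurableSet_Icc
  have hmemIcc : ∀ (k : ℕ) (v : ℝ), v ∈ Icc (-(st.b (k₀+1+k))) (st.b (k₀+1+k)) ↔
      |v| ≤ st.b (k₀+1+k) := by
    intro k v; rw [Set.mem_Icc, abs_le]
  -- telescoping
  have htele : ∀ M : ℕ, ∑ k ∈ Finset.range M, w k =
      ENNReal.ofReal (α₀ * (Real.log (st.b k₀) - Real.log (st.b (k₀+M)))) := by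
    intro M
    induction M with
    | zero => simp
    | succ n ihn =>
      have hn1 : 0 ≤ α₀ * (Real.log (st.b k₀) - Real.log (st.b (k₀+n))) := by
        have := st.log_b_anti (show k₀ ≤ k₀ + n by omega)
        nlinarith
      have hn2 : 0 ≤ α₀ * (Real.log (st.b (k₀+n)) - Real.log (st.b (k₀+n+1))) := by
        have := st.log_b_anti (show k₀ + n ≤ k₀ + n + 1 by omega)
        nlinarith
      rw [Finset.sum_range_succ, ihn, hw_def, ← ENNReal.ofReal_add hn1 hn2]
      congr 1
      have : k₀ + (n + 1) = k₀ + n + 1 := by omega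
      rw [this]; ring
  -- pointwise bound
  have hpoint : ∀ v : ℝ, v ≠ 0 → (∑' k, F k v) ≤
      (if |v| ≤ r then ENNReal.ofReal (α₀ * (-Real.log |v|) - C₁) else 0) := by
    intro v hv
    have hvpos : 0 < |v| := abs_pos.2 hv
    by_cases hv1 : |v| ≤ st.b (k₀+1)
    · have hex : ∃ k, ¬ (|v| ≤ st.b (k₀+1+k)) := by
        obtain ⟨m, hm⟩ := st.b_small hvpos
        refine ⟨m, ?_⟩
        push_neg
        calc st.b (k₀+1+m) ≤ st.b m := st.b_anti (by omega)
        _ < |v| := hm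
      set N := Nat.find hex with hN_def
      have hsp : ¬ (|v| ≤ st.b (k₀+1+N)) := Nat.find_spec hex
      have hNpos : 0 < N := by
        rcases Nat.eq_zero_or_pos N with h0 | h
        · exfalso; rw [h0] at hsp; exact hsp (by simpa using hv1)
        · exact h
      have hPk : ∀ k, k < N → |v| ≤ st.b (k₀+1+k) := fun k hk =>
        not_not.1 (Nat.find_min hex hk)
      have hzero : ∀ k, N ≤ k → F k v = 0 := by
        intro k hk
        rw [hF_def]
        apply Set.indicator_of_notMem
        rw [hmemIcc]
        intro hle
        exact hsp (le_trans hle (st.b_anti (by omega)))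
      have hsum : (∑' k, F k v) = ∑ k ∈ Finset.range N, F k v :=
        tsum_eq_sum (fun k hk => hzero k (by simpa [Finset.mem_range, not_lt] using hk))
      have hFw : ∀ k ∈ Finset.range N, F k v = w k := by
        intro k hk
        rw [hF_def]
        exact Set.indicator_of_mem ((hmemIcc k v).2 (hPk k (Finset.mem_range.1 hk))) _
      rw [hsum, Finset.sum_congr rfl hFw, htele N]
      have hvr : |v| ≤ r := le_trans hv1 (le_trans (st.b_anti (by omega)) hbk₀r)
      rw [if_pos hvr]
      apply ENNReal.ofReal_le_ofReal
      have hB : Real.log |v| ≤ Real.log (st.b (k₀+N)) := by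
        apply Real.log_le_log hvpos
        have := hPk (N-1) (by omega)
        calc |v| ≤ st.b (k₀+1+(N-1)) := this
        _ = st.b (k₀+N) := by congr 1; omega
      have hαB : α₀ * Real.log |v| ≤ α₀ * Real.log (st.b (k₀+N)) :=
        mul_le_mul_of_nonneg_left hB (le_of_lt hα)
      nlinarith
    · have hallz : ∀ k, F k v = 0 := by
        intro k
        rw [hF_def]
        apply Set.indicator_of_notMem
        rw [hmemIcc]
        intro hle
        exact hv1 (le_trans hle (st.b_anti (by omega)))
      rw [tsum_congr hallz]
      simp
  -- a.e. nonzero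
  have hae : ∀ᵐ (v : ℝ) ∂μ, v ≠ 0 := by
    refine ae_iff.2 ?_
    have : {v : ℝ | ¬ v ≠ 0} = {(0:ℝ)} := by ext v; simp
    rw [this]; exact hatom
  -- integral computation
  have hint : ∀ k, ∫⁻ v, F k v ∂μ =
      w k * μ (Icc (-(st.b (k₀+1+k))) (st.b (k₀+1+k))) := by
    intro k
    rw [hF_def]
    exact lintegral_indicator_const measurableSet_Icc _
  have hchain : (∑' k, w k * μ (Icc (-(st.b (k₀+1+k))) (st.b (k₀+1+k)))) ≤
      ∫⁻ v, (if |v| ≤ r then ENNReal.ofReal (α₀ * (-Real.log |v|) - C₁) else 0) ∂μ := by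
    calc (∑' k, w k * μ (Icc (-(st.b (k₀+1+k))) (st.b (k₀+1+k))))
        = ∑' k, ∫⁻ v, F k v ∂μ := by
          exact (tsum_congr (fun k => (hint k).symm))
    _ = ∫⁻ v, (∑' k, F k v) ∂μ := (lintegral_tsum (fun k => (hFmeas k).aemeasurable)).symm
    _ ≤ ∫⁻ v, (if |v| ≤ r then ENNReal.ofReal (α₀ * (-Real.log |v|) - C₁) else 0) ∂μ := by
          apply lintegral_mono_ae
          filter_upwards [hae] with v hv
          exact hpoint v hv
  -- term lower bound
  set e : ℝ≥0∞ := ENNReal.ofReal (α₀ * a / 10) with he_def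
  have he0 : e ≠ 0 := by
    rw [he_def]
    exact (ENNReal.ofReal_pos.2 (by positivity)).ne'
  set k₁ : ℕ := max 1 ⌈(2 * c₂) / a⌉₊ with hk₁_def
  have hterm : ∀ k, k₁ ≤ k → e ≤ w k * μ (Icc (-(st.b (k₀+1+k))) (st.b (k₀+1+k))) := by
    intro k hk
    set j := k₀ + k with hj_def
    have hj1 : 1 ≤ j := by omega
    -- c₂ small compared to s j * a
    have hsj : ((2 * c₂) / a) ≤ (st.s j : ℝ) := by
      have h1 : ((2 * c₂) / a) ≤ (⌈(2 * c₂) / a⌉₊ : ℝ) := Nat.le_ceil _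
      have h2 : (⌈(2 * c₂) / a⌉₊ : ℝ) ≤ (st.s j : ℝ) := by
        have hle : ⌈(2 * c₂) / a⌉₊ ≤ st.s j := by
          have := st.s_ge j
          omega
        exact_mod_cast hle
      linarith
    have hc2half : c₂ ≤ (st.s j : ℝ) * a / 2 := by
      have h2c : 2 * c₂ ≤ (st.s j : ℝ) * a := (div_le_iff₀ ha).1 hsj
      refine (le_div_iff₀ (by norm_num : (0:ℝ) < 2)).2 ?_
      rw [mul_comm]
      exact h2c
    have hw2 : ENNReal.ofReal (α₀ * ((st.s j : ℝ) * a / 2)) ≤ w k := by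
      rw [hw_def]
      apply ENNReal.ofReal_le_ofReal
      have hlr := st.log_ratio j hj1
      have : (st.s j : ℝ) * a / 2 ≤ Real.log (st.b j) - Real.log (st.b (j+1)) := by
        rw [hc₂_def] at hc2half
        linarith
      have h2 : α₀ * ((st.s j : ℝ) * a / 2) ≤
          α₀ * (Real.log (st.b j) - Real.log (st.b (j+1))) :=
        mul_le_mul_of_nonneg_left this (le_of_lt hα)
      calc α₀ * ((st.s j : ℝ) * a / 2)
          ≤ α₀ * (Real.log (st.b j) - Real.log (st.b (j+1))) := h2
      _ = α₀ * (Real.log (st.b (k₀+k)) - Real.log (st.b (k₀+k+1))) := rfl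
    have hμ2 : ((5 * st.s j : ℕ) : ℝ≥0∞)⁻¹ ≤
        μ (Icc (-(st.b (k₀+1+k))) (st.b (k₀+1+k))) := by
      have hmb := st.meas_ball μ hinvar hsupp (j+1)
      have hIccEq : st.b (j+1) = st.b (k₀+1+k) := by congr 1; omega
      rw [hIccEq] at hmb
      refine le_trans ?_ hmb
      apply ENNReal.inv_le_inv'
      have harith : st.s (j+1+1) + 1 ≤ 5 * st.s j := by
        have h1 := st.s_le2 (j+1)
        have h2 := st.s_le2 j
        have h3 := st.s_pos j
        omega
      exact_mod_cast harith
    have hen : e * ((5 * st.s j : ℕ) : ℝ≥0∞) = ENNReal.ofReal (α₀ * ((st.s j : ℝ) * a / 2)) := by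
      rw [he_def, ← ENNReal.ofReal_natCast, ← ENNReal.ofReal_mul (by positivity)]
      congr 1
      push_cast
      ring
    have hn0 : ((5 * st.s j : ℕ) : ℝ≥0∞) ≠ 0 := by
      have := st.s_pos j
      simp only [ne_eq, Nat.cast_eq_zero]
      omega
    have hnt : ((5 * st.s j : ℕ) : ℝ≥0∞) ≠ ⊤ := ENNReal.natCast_ne_top _
    calc e = e * (((5 * st.s j : ℕ) : ℝ≥0∞) * ((5 * st.s j : ℕ) : ℝ≥0∞)⁻¹) := by
          rw [ENNReal.mul_inv_cancel hn0 hnt, mul_one]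
    _ = (e * ((5 * st.s j : ℕ) : ℝ≥0∞)) * ((5 * st.s j : ℕ) : ℝ≥0∞)⁻¹ := by ring
    _ = ENNReal.ofReal (α₀ * ((st.s j : ℝ) * a / 2)) * ((5 * st.s j : ℕ) : ℝ≥0∞)⁻¹ := by
          rw [hen]
    _ ≤ w k * μ (Icc (-(st.b (k₀+1+k))) (st.b (k₀+1+k))) := mul_le_mul' hw2 hμ2
  -- divergence
  have htop : (⊤ : ℝ≥0∞) ≤ ∑' k, w k * μ (Icc (-(st.b (k₀+1+k))) (st.b (k₀+1+k))) := by
    calc (⊤ : ℝ≥0∞) = ∑' (_ : ℕ), e := (ENNReal.tsum_const_eq_top_of_ne_zero he0).symm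
    _ ≤ ∑' (i : ℕ), w (k₁+i) * μ (Icc (-(st.b (k₀+1+(k₁+i)))) (st.b (k₀+1+(k₁+i)))) :=
        ENNReal.tsum_le_tsum (fun i => hterm (k₁+i) (by omega))
    _ ≤ ∑' k, w k * μ (Icc (-(st.b (k₀+1+k))) (st.b (k₀+1+k))) := by
        apply ENNReal.summable.tsum_le_tsum_of_inj (fun i => k₁ + i) (add_right_injective k₁)
          (fun c _ => zero_le) (fun i => le_rfl) ENNReal.summable
  exact top_le_iff.1 (le_trans htop hchain)

end TentSetup

-- continuity of the inverse at interior image points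
lemma invCont (h hinv : ℝ → ℝ) (hmono : StrictMonoOn h (Set.Icc (-1 : ℝ) 1))
    (hbij : Set.BijOn h (Set.Icc (-1 : ℝ) 1) (Set.Icc (-1 : ℝ) 1))
    (hinvl : ∀ x ∈ Set.Icc (-1 : ℝ) 1, hinv (h x) = x)
    {u : ℝ} (hu : u ∈ Set.Ioo (-1 : ℝ) 1) : ContinuousAt hinv (h u) := by
  have hle : ∀ p ∈ Set.Icc (-1:ℝ) 1, ∀ q ∈ Set.Icc (-1:ℝ) 1, p ≤ q → h p ≤ h q := by
    intro p hp q hq hpq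
    rcases eq_or_lt_of_le hpq with rfl | hlt
    · exact le_rfl
    · exact le_of_lt (hmono hp hq hlt)
  have hinv_spec : ∀ y ∈ Set.Icc (-1:ℝ) 1, hinv y ∈ Set.Icc (-1:ℝ) 1 ∧ h (hinv y) = y := by
    intro y hy
    obtain ⟨w, hw, hwy⟩ := hbij.surjOn hy
    rw [← hwy, hinvl w hw]
    exact ⟨hw, rfl⟩
  rw [Metric.continuousAt_iff]
  intro ε hε
  have hu1 : -1 < u := hu.1
  have hu2 : u < 1 := hu.2
  set ε' := min ε (min (1 - u) (u + 1)) / 2 with hε'_def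
  have hε'pos : 0 < ε' := by
    have h1 : 0 < 1 - u := by linarith
    have h2 : 0 < u + 1 := by linarith
    have : 0 < min ε (min (1 - u) (u + 1)) := lt_min hε (lt_min h1 h2)
    positivity
  have hε'lt : ε' < ε := by
    have h1 : min ε (min (1 - u) (u + 1)) ≤ ε := min_le_left _ _
    have : 0 < min ε (min (1 - u) (u + 1)) := by
      have h1 : 0 < 1 - u := by linarith
      have h2 : 0 < u + 1 := by linarith
      exact lt_min hε (lt_min h1 h2)
    rw [hε'_def]; linarith
  have hlo_mem : u - ε' ∈ Set.Icc (-1:ℝ) 1 := by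
    constructor
    · have : min ε (min (1 - u) (u + 1)) ≤ u + 1 :=
        le_trans (min_le_right _ _) (min_le_right _ _)
      rw [hε'_def]; linarith
    · linarith [hε'pos]
  have hhi_mem : u + ε' ∈ Set.Icc (-1:ℝ) 1 := by
    constructor
    · linarith [hε'pos]
    · have : min ε (min (1 - u) (u + 1)) ≤ 1 - u :=
        le_trans (min_le_right _ _) (min_le_left _ _)
      rw [hε'_def]; linarith
  have hu_mem : u ∈ Set.Icc (-1:ℝ) 1 := ⟨le_of_lt hu1, le_of_lt hu2⟩
  set δ₀ := min (h u - h (u - ε')) (h (u + ε') - h u) with hδ₀_def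
  have hδ₀pos : 0 < δ₀ := by
    apply lt_min
    · have := hmono hlo_mem hu_mem (by linarith)
      linarith
    · have := hmono hu_mem hhi_mem (by linarith)
      linarith
  refine ⟨δ₀, hδ₀pos, ?_⟩
  intro y hy
  rw [Real.dist_eq] at hy
  have hy1 : h (u - ε') < y := by
    have h1 : |y - h u| < h u - h (u - ε') := lt_of_lt_of_le hy (min_le_left _ _)
    have := abs_lt.1 h1
    linarith [this.1]
  have hy2 : y < h (u + ε') := by
    have h1 : |y - h u| < h (u + ε') - h u := lt_of_lt_of_le hy (min_le_right _ _)
    have := abs_lt.1 h1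
    linarith [this.2]
  have hy_mem : y ∈ Set.Icc (-1:ℝ) 1 := by
    constructor
    · have := (hbij.mapsTo hlo_mem).1
      linarith
    · have := (hbij.mapsTo hhi_mem).2
      linarith
  obtain ⟨hyIcc, hyh⟩ := hinv_spec y hy_mem
  have hlow : u - ε' < hinv y := by
    by_contra hcon
    push_neg at hcon
    have := hle _ hyIcc _ hlo_mem hcon
    rw [hyh] at this
    linarith
  have hhigh : hinv y < u + ε' := by
    by_contra hcon
    push_neg at hcon
    have := hle _ hhi_mem _ hyIcc hcon
    rw [hyh] at this
    linarith
  rw [Real.dist_eq, hinvl u hu_mem]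
  rw [abs_lt]
  constructor <;> [linarith; linarith]

set_option maxHeartbeats 2000000 in
theorem negative_part_log_deriv_not_integrable
    (lam : ℝ) (hlam1 : 1 < lam) (hlam2 : lam ≤ 2)
    (T : ℝ → ℝ) (hT : ∀ x : ℝ, T x = lam * (1 - |x|) - 1)
    (c : ℕ → ℝ) (hc : ∀ i : ℕ, c i = T^[i] 0)
    (S : ℤ → ℕ) (hSm2 : S (-2) = 0) (hSm1 : S (-1) = 1)
    (hSrec : ∀ k : ℤ, 0 ≤ k → S k = S (k - 1) + S (k - 2))
    (hcne : ∀ j : ℕ, 1 ≤ j → c j ≠ 0)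
    (hc2neg : c 2 < 0) (hc1pos : 0 < c 1)
    (hsame : ∀ k : ℤ, 2 ≤ k → ∀ j : ℕ, 1 ≤ j → j < S (k - 2) →
      (0 < c (S (k - 1) + j) ↔ 0 < c j))
    (hopp : ∀ k : ℤ, 2 ≤ k → (0 < c (S k) ↔ c (S (k - 2)) < 0))
    (hdec : ∀ k : ℤ, 0 ≤ k → |c (S (k + 1))| < |c (S k)|)
    (hc34 : |c 3| < |c 4|)
    (h : ℝ → ℝ) (h' : ℝ → ℝ) (hinv : ℝ → ℝ)
    (hmono : StrictMonoOn h (Set.Icc (-1 : ℝ) 1))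
    (hbij : Set.BijOn h (Set.Icc (-1 : ℝ) 1) (Set.Icc (-1 : ℝ) 1))
    (hhd : ∀ x ∈ Set.Icc (-1 : ℝ) 1, HasDerivWithinAt h (h' x) (Set.Icc (-1 : ℝ) 1) x)
    (hC1 : ContinuousOn h' (Set.Icc (-1 : ℝ) 1))
    (hinvl : ∀ x ∈ Set.Icc (-1 : ℝ) 1, hinv (h x) = x)
    (hinvr : ∀ y ∈ Set.Icc (-1 : ℝ) 1, h (hinv y) = y)
    (h'ne : ∀ x ∈ Set.Icc (-1 : ℝ) 1, x ≠ 0 → h' x ≠ 0)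
    (h'0 : h' 0 = 0)
    (αp αm M δ : ℝ) (hαp : 0 < αp) (hαm : 0 < αm) (hM : 0 < M)
    (hδ : 0 < δ) (hδ1 : δ ≤ 1)
    (hnfp : ∀ x ∈ Set.Ioo (0 : ℝ) δ,
      Real.exp (-M) * x ^ αp ≤ h' x ∧ h' x ≤ Real.exp M * x ^ αp)
    (hnfm : ∀ x ∈ Set.Ioo (-δ) (0 : ℝ),
      Real.exp (-M) * |x| ^ αm ≤ h' x ∧ h' x ≤ Real.exp M * |x| ^ αm)
    (f : ℝ → ℝ) (hfdef : ∀ x : ℝ, f x = h (T (hinv x)))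
    (ct : ℝ) (hct : ct = h 0)
    (μP : MeasureTheory.Measure ℝ) [MeasureTheory.IsProbabilityMeasure μP]
    (hinvar : MeasureTheory.Measure.map T μP = μP)
    (hsupp : μP (closure {y : ℝ | ∃ n : ℕ, T^[n] 0 = y})ᶜ = 0)
    (hatom : μP {(0 : ℝ)} = 0) :
    ∫⁻ x, ENNReal.ofReal (max 0 (-(Real.log |deriv f x|))) ∂(MeasureTheory.Measure.map h μP) = ⊤ := by
  have hlam0 : 0 < lam := lt_trans one_pos hlam1
  -- basic S values
  have hS0 : S 0 = 1 := by
    have := hSrec 0 (by norm_num)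
    rw [show (0:ℤ) - 1 = -1 by norm_num, show (0:ℤ) - 2 = -2 by norm_num, hSm1, hSm2] at this
    omega
  have hS1 : S 1 = 2 := by
    have := hSrec 1 (by norm_num)
    rw [show (1:ℤ) - 1 = 0 by norm_num, show (1:ℤ) - 2 = -1 by norm_num, hS0, hSm1] at this
    omega
  have hS2 : S 2 = 3 := by
    have := hSrec 2 (by norm_num)
    rw [show (2:ℤ) - 1 = 1 by norm_num, show (2:ℤ) - 2 = 0 by norm_num, hS1, hS0] at this
    omega
  -- basic orbit values
  have hc0 : c 0 = 0 := by simpa using hc 0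
  have hcs : ∀ n, c (n + 1) = T (c n) := by
    intro n
    rw [hc (n+1), hc n, Function.iterate_succ_apply']
  have hc1v : c 1 = lam - 1 := by
    rw [hcs 0, hc0, hT]
    simp
  have hc2v : c 2 = -(lam - 1)^2 := by
    rw [hcs 1, hc1v, hT, abs_of_nonneg (by linarith : (0:ℝ) ≤ lam - 1)]
    ring
  -- lam < 2
  have hlt2 : lam < 2 := by
    rcases lt_or_eq_of_le hlam2 with hlt | heq
    · exact hlt
    · exfalso
      have hc2' : c 2 = -1 := by rw [hc2v, heq]; norm_num
      have hc3' : c 3 = -1 := by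
        rw [hcs 2, hc2', hT, heq]
        norm_num
      have := hdec 1 (by norm_num)
      rw [show (1:ℤ) + 1 = 2 by norm_num, hS2, hS1, hc3', hc2'] at this
      norm_num at this
  -- the nat Fibonacci sequence
  set s : ℕ → ℕ := fun m => S (m : ℤ) with hs_def
  have hs0 : s 0 = 1 := by simpa [hs_def] using hS0
  have hs1 : s 1 = 2 := by simpa [hs_def] using hS1
  have hsrec : ∀ m : ℕ, s (m + 2) = s (m + 1) + s m := by
    intro m
    have h1 := hSrec ((m:ℤ) + 2) (by omega)
    rw [show (m:ℤ) + 2 - 1 = (m:ℤ) + 1 by ring, show (m:ℤ) + 2 - 2 = (m:ℤ) by ring] at h1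
    have e2 : ((m + 2 : ℕ) : ℤ) = (m:ℤ) + 2 := by push_cast; ring
    have e1 : ((m + 1 : ℕ) : ℤ) = (m:ℤ) + 1 := by push_cast; ring
    simp only [hs_def, e2, e1]
    exact h1
  have hsame' : ∀ m j, 1 ≤ j → j < s m → (0 < c (s (m + 1) + j) ↔ 0 < c j) := by
    intro m j hj1 hj2
    have h1 := hsame ((m:ℤ) + 2) (by omega) j hj1 (by
      rwa [show (m:ℤ) + 2 - 2 = (m:ℤ) by ring])
    rw [show (m:ℤ) + 2 - 1 = (m:ℤ) + 1 by ring] at h1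
    have e1 : ((m + 1 : ℕ) : ℤ) = (m:ℤ) + 1 := by push_cast; ring
    simp only [hs_def, e1]
    exact h1
  have hopp' : ∀ m, (0 < c (s (m + 2)) ↔ c (s m) < 0) := by
    intro m
    have h1 := hopp ((m:ℤ) + 2) (by omega)
    rw [show (m:ℤ) + 2 - 2 = (m:ℤ) by ring] at h1
    have e2 : ((m + 2 : ℕ) : ℤ) = (m:ℤ) + 2 := by push_cast; ring
    simp only [hs_def, e2]
    exact h1
  have hdec' : ∀ m : ℕ, |c (s (m + 1))| < |c (s m)| := by
    intro m
    have h1 := hdec (m:ℤ) (by omega)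
    have e1 : ((m + 1 : ℕ) : ℤ) = (m:ℤ) + 1 := by push_cast; ring
    simp only [hs_def, e1]
    exact h1
  -- orbit stays in [c 2, c 1]
  have horb : ∀ j, c j ∈ Set.Icc (c 2) (c 1) := by
    intro j
    induction j with
    | zero =>
      rw [hc0]
      exact ⟨le_of_lt hc2neg, le_of_lt hc1pos⟩
    | succ n ih =>
      rw [hcs n]
      obtain ⟨h1, h2⟩ := ih
      have hxabs : |c n| ≤ lam - 1 := by
        rw [abs_le]
        constructor
        · rw [hc2v] at h1; nlinarith
        · rw [hc1v] at h2; linarith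
      have habs0 : (0:ℝ) ≤ |c n| := abs_nonneg _
      constructor
      · rw [hT, hc2v]; nlinarith
      · rw [hT, hc1v]; nlinarith
  have horbabs : ∀ j, |c j| ≤ lam - 1 := by
    intro j
    obtain ⟨h1, h2⟩ := horb j
    rw [abs_le]
    constructor
    · rw [hc2v] at h1; nlinarith
    · rw [hc1v] at h2; linarith
  -- support inside [-(lam-1), lam-1]
  have hKsub : closure {y : ℝ | ∃ n : ℕ, T^[n] 0 = y} ⊆ Set.Icc (-(lam-1)) (lam-1) := by
    apply closure_minimal _ isClosed_Icc
    rintro y ⟨n, rfl⟩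
    have := horbabs n
    rw [hc n] at this
    exact ⟨(abs_le.1 this).1, (abs_le.1 this).2⟩
  have hIccnull : μP (Set.Icc (-(lam-1)) (lam-1))ᶜ = 0 :=
    measure_mono_null (Set.compl_subset_compl.2 hKsub) hsupp
  have haeIcc : ∀ᵐ u ∂μP, |u| ≤ lam - 1 := by
    refine (MeasureTheory.ae_iff).2 ?_
    have : {u : ℝ | ¬ |u| ≤ lam - 1} = (Set.Icc (-(lam-1)) (lam-1))ᶜ := by
      ext u; simp [abs_le, not_and_or, Set.mem_Icc]
    rw [this]
    exact hIccnull
  -- endpoints of h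
  have hend1 : h 1 = 1 := by
    obtain ⟨w, hw, hw1⟩ := hbij.surjOn (show (1:ℝ) ∈ Set.Icc (-1:ℝ) 1 by norm_num)
    rcases lt_or_eq_of_le hw.2 with hlt | heq
    · exfalso
      have h1 : h w < h 1 := hmono hw (by norm_num) hlt
      have h2 := (hbij.mapsTo (show (1:ℝ) ∈ Set.Icc (-1:ℝ) 1 by norm_num)).2
      rw [hw1] at h1
      linarith
    · subst heq; exact hw1
  have hendm1 : h (-1) = -1 := by
    obtain ⟨w, hw, hw1⟩ := hbij.surjOn (show (-1:ℝ) ∈ Set.Icc (-1:ℝ) 1 by norm_num)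
    rcases lt_or_eq_of_le hw.1 with hlt | heq
    · exfalso
      have h1 : h (-1) < h w := hmono (by norm_num) hw hlt
      have h2 := (hbij.mapsTo (show (-1:ℝ) ∈ Set.Icc (-1:ℝ) 1 by norm_num)).1
      rw [hw1] at h1
      linarith
    · have heq' : w = -1 := heq.symm
      subst heq'; exact hw1
  have hIoo : ∀ u ∈ Set.Ioo (-1:ℝ) 1, h u ∈ Set.Ioo (-1:ℝ) 1 := by
    intro u hu
    constructor
    · rw [← hendm1]
      exact hmono (by norm_num) ⟨le_of_lt hu.1, le_of_lt hu.2⟩ hu.1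
    · rw [← hend1]
      exact hmono ⟨le_of_lt hu.1, le_of_lt hu.2⟩ (by norm_num) hu.2
  -- constants
  set z₀ : ℝ := 1 - 1/lam with hz₀_def
  have hz₀pos : 0 < z₀ := by
    rw [hz₀_def]
    have : 1/lam < 1 := by rw [div_lt_one hlam0]; exact hlam1
    linarith
  have hz₀lt : z₀ < 1/2 := by
    rw [hz₀_def]
    have : 1/2 < 1/lam := by
      rw [div_lt_div_iff₀ (by norm_num) hlam0]
      linarith
    linarith
  set r : ℝ := min (δ/2) (min (lam*z₀/2) (1/2)) with hr_def
  have hrpos : 0 < r := by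
    rw [hr_def]
    apply lt_min (by linarith)
    exact lt_min (by positivity) (by norm_num)
  have hrδ : r < δ := lt_of_le_of_lt (min_le_left _ _) (by linarith)
  have hrz : r ≤ lam*z₀/2 := le_trans (min_le_right _ _) (min_le_left _ _)
  have hrhalf : r ≤ 1/2 := le_trans (min_le_right _ _) (min_le_right _ _)
  set a₂ : ℝ := z₀ + r/lam with ha₂_def
  have ha₂1 : a₂ < 1 := by
    rw [ha₂_def]
    have h1 : r/lam < 1/2 := by
      rw [div_lt_iff₀ hlam0]
      nlinarith
    linarith
  have ha₂pos : 0 < a₂ := by rw [ha₂_def]; positivity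
  -- minimum of |h'| away from 0
  set Q : Set ℝ := Set.Icc (-a₂) a₂ ∩ {x : ℝ | z₀/2 ≤ |x|} with hQ_def
  have hQcomp : IsCompact Q := (isCompact_Icc).inter_right
    (isClosed_le continuous_const continuous_abs)
  have hQsub : Q ⊆ Set.Icc (-1:ℝ) 1 := by
    rintro x ⟨hx1, _⟩
    exact ⟨by linarith [hx1.1], by linarith [hx1.2]⟩
  have hQne : Q.Nonempty := by
    have hra : 0 ≤ r/lam := le_of_lt (div_pos hrpos hlam0)
    refine ⟨z₀, ⟨⟨by linarith, by rw [ha₂_def]; linarith⟩, ?_⟩⟩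
    rw [Set.mem_setOf_eq, abs_of_pos hz₀pos]
    linarith
  have habsC : ContinuousOn (fun x => |h' x|) Q := (hC1.mono hQsub).abs
  obtain ⟨x₀, hx₀Q, hx₀min⟩ := hQcomp.exists_isMinOn hQne habsC
  set ε₀ : ℝ := |h' x₀| with hε₀_def
  have hx₀ne : x₀ ≠ 0 := by
    intro hx
    have := hx₀Q.2
    rw [Set.mem_setOf_eq, hx, abs_zero] at this
    linarith
  have hε₀pos : 0 < ε₀ := abs_pos.2 (h'ne x₀ (hQsub hx₀Q) hx₀ne)
  have hQbound : ∀ u ∈ Q, ε₀ ≤ |h' u| := fun u hu => hx₀min hu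
  set α₀ : ℝ := min αp αm with hα₀_def
  have hα₀pos : 0 < α₀ := lt_min hαp hαm
  set C₁ : ℝ := M + Real.log lam - Real.log ε₀ with hC₁_def
  -- measurability of T
  have hTcont : Continuous T := by
    have : T = fun x => lam * (1 - |x|) - 1 := funext hT
    rw [this]
    exact (continuous_const.mul (continuous_const.sub continuous_abs)).sub continuous_const
  have hTmeas : Measurable T := hTcont.measurable
  -- the key pointwise bound
  have hkey : ∀ u : ℝ, |u| ≤ lam - 1 → u ≠ 0 → T u ≠ 0 →
      (if |T u| ≤ r then ENNReal.ofReal (α₀ * (-Real.log |T u|) - C₁) else 0)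
        ≤ ENNReal.ofReal (max 0 (-(Real.log |deriv f (h u)|))) := by
    intro u hua hu0 hTu0
    by_cases hTur : |T u| ≤ r
    swap
    · rw [if_neg hTur]; exact zero_le
    rw [if_pos hTur]
    have hTuval : T u = lam * (1 - |u|) - 1 := hT u
    have hTabs := abs_le.1 hTur
    have huup : |u| ≤ a₂ := by
      rw [ha₂_def, hz₀_def]
      have h1 : 1 - r ≤ lam * (1 - |u|) := by rw [hTuval] at hTabs; linarith [hTabs.1]
      have h2 : (1 - r)/lam ≤ 1 - |u| := by
        rw [div_le_iff₀ hlam0]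
        nlinarith
      have h3 : (1-r)/lam = 1/lam - r/lam := by ring
      linarith [h2, h3.symm.le]
    have hulow : z₀/2 ≤ |u| := by
      have h1 : lam * (1 - |u|) ≤ 1 + r := by rw [hTuval] at hTabs; linarith [hTabs.2]
      have h2 : 1 - |u| ≤ (1 + r)/lam := by
        rw [le_div_iff₀ hlam0]
        nlinarith
      have h3 : (1+r)/lam = 1/lam + r/lam := by ring
      have h4 : r/lam ≤ z₀/2 := by
        rw [div_le_iff₀ hlam0]
        nlinarith
      rw [hz₀_def]
      rw [hz₀_def] at h4
      linarith
    have huI : u ∈ Set.Ioo (-1:ℝ) 1 := by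
      have := lt_of_le_of_lt huup ha₂1
      exact abs_lt.1 this
    have huIcc : u ∈ Set.Icc (-1:ℝ) 1 := Set.Ioo_subset_Icc_self huI
    have hTuI : T u ∈ Set.Ioo (-1:ℝ) 1 := by
      have : |T u| < 1 := lt_of_le_of_lt hTur (by linarith)
      exact abs_lt.1 this
    have hTuIcc : T u ∈ Set.Icc (-1:ℝ) 1 := Set.Ioo_subset_Icc_self hTuI
    -- derivatives
    have hhu : HasDerivAt h (h' u) u :=
      (hhd u huIcc).hasDerivAt (Icc_mem_nhds huI.1 huI.2)
    have hhTu : HasDerivAt h (h' (T u)) (T u) :=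
      (hhd (T u) hTuIcc).hasDerivAt (Icc_mem_nhds hTuI.1 hTuI.2)
    have hu'ne : h' u ≠ 0 := h'ne u huIcc hu0
    have hinvu : hinv (h u) = u := hinvl u huIcc
    have hinvC : ContinuousAt hinv (h u) := invCont h hinv hmono hbij hinvl huI
    have hloc : ∀ᶠ y in nhds (h u), h (hinv y) = y := by
      have hIoonb : Set.Ioo (-1:ℝ) 1 ∈ nhds (h u) := (isOpen_Ioo).mem_nhds (hIoo u huI)
      filter_upwards [hIoonb] with y hy
      exact hinvr y (Set.Ioo_subset_Icc_self hy)
    have hinvD : HasDerivAt hinv (h' u)⁻¹ (h u) :=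
      HasDerivAt.of_local_left_inverse hinvC (by rw [hinvu]; exact hhu) hu'ne hloc
    set τ : ℝ := if 0 < u then -lam else lam with hτ_def
    have hτabs : |τ| = lam := by
      rw [hτ_def]
      by_cases hp : 0 < u
      · rw [if_pos hp, abs_neg, abs_of_pos hlam0]
      · rw [if_neg hp, abs_of_pos hlam0]
    have hTD : HasDerivAt T τ u := by
      rcases lt_or_gt_of_ne hu0 with hneg | hpos
      · rw [hτ_def, if_neg (not_lt.2 (le_of_lt hneg))]
        have h1 : HasDerivAt (fun x : ℝ => lam * (1 + x) - 1) lam u := by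
          simpa using (((hasDerivAt_id u).const_add (1:ℝ)).const_mul lam).sub_const 1
        apply h1.congr_of_eventuallyEq
        filter_upwards [Iio_mem_nhds hneg] with x hx
        rw [hT x, abs_of_neg hx]
        ring
      · rw [hτ_def, if_pos hpos]
        have h1 : HasDerivAt (fun x : ℝ => lam * (1 - x) - 1) (-lam) u := by
          simpa using (((hasDerivAt_id u).const_sub (1:ℝ)).const_mul lam).sub_const 1
        apply h1.congr_of_eventuallyEq
        filter_upwards [Ioi_mem_nhds hpos] with x hx
        rw [hT x, abs_of_pos hx]
    have hTinv : HasDerivAt (fun y => T (hinv y)) (τ * (h' u)⁻¹) (h u) :=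
      HasDerivAt.comp (h u) (by rw [hinvu]; exact hTD) hinvD
    have hfD : HasDerivAt f (h' (T u) * (τ * (h' u)⁻¹)) (h u) := by
      have e1 : T (hinv (h u)) = T u := by rw [hinvu]
      have hg : HasDerivAt h (h' (T u)) ((fun y => T (hinv y)) (h u)) := by
        show HasDerivAt h (h' (T u)) (T (hinv (h u)))
        rw [e1]; exact hhTu
      have hcomp := HasDerivAt.comp (h u) hg hTinv
      have hfeq : f = h ∘ (fun y => T (hinv y)) := funext (fun y => hfdef y)
      rw [hfeq]
      exact hcomp
    have hderiv : deriv f (h u) = h' (T u) * (τ * (h' u)⁻¹) := hfD.deriv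
    -- h'(T u) estimates
    have hTuabs_pos : 0 < |T u| := abs_pos.2 hTu0
    have hTur' : |T u| < δ := lt_of_le_of_lt hTur hrδ
    have hTult1 : |T u| < 1 := lt_of_le_of_lt hTur (by linarith)
    have hlogTuneg : Real.log |T u| < 0 := Real.log_neg hTuabs_pos hTult1
    have hhTu_pos : 0 < h' (T u) ∧ Real.log (h' (T u)) ≤ M + α₀ * Real.log |T u| := by
      rcases lt_or_gt_of_ne hTu0 with hneg | hpos
      · have hmem : T u ∈ Set.Ioo (-δ) (0:ℝ) := by
          constructor
          · rw [abs_of_neg hneg] at hTur'; linarith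
          · exact hneg
        obtain ⟨hlo, hhi⟩ := hnfm (T u) hmem
        have hpow : (0:ℝ) < |T u| ^ αm := Real.rpow_pos_of_pos hTuabs_pos αm
        have hppos : 0 < h' (T u) := by
          calc (0:ℝ) < Real.exp (-M) * |T u| ^ αm := by positivity
          _ ≤ h' (T u) := hlo
        refine ⟨hppos, ?_⟩
        have hlog := Real.log_le_log hppos hhi
        rw [Real.log_mul (Real.exp_ne_zero M) (ne_of_gt hpow), Real.log_exp,
            Real.log_rpow hTuabs_pos] at hlog
        have h2 : αm * Real.log |T u| ≤ α₀ * Real.log |T u| :=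
          mul_le_mul_of_nonpos_right (min_le_right αp αm) (le_of_lt hlogTuneg)
        linarith
      · have hmem : T u ∈ Set.Ioo (0:ℝ) δ := by
          constructor
          · exact hpos
          · rw [abs_of_pos hpos] at hTur'; linarith
        obtain ⟨hlo, hhi⟩ := hnfp (T u) hmem
        have habsTu : |T u| = T u := abs_of_pos hpos
        have hpow : (0:ℝ) < (T u) ^ αp := Real.rpow_pos_of_pos hpos αp
        have hppos : 0 < h' (T u) := by
          calc (0:ℝ) < Real.exp (-M) * (T u) ^ αp := by positivity
          _ ≤ h' (T u) := hlo
        refine ⟨hppos, ?_⟩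
        have hlog := Real.log_le_log hppos hhi
        rw [Real.log_mul (Real.exp_ne_zero M) (ne_of_gt hpow), Real.log_exp,
            Real.log_rpow hpos] at hlog
        have hlogTuneg' : Real.log (T u) < 0 := by
          rw [← habsTu]; exact hlogTuneg
        have h2 : αp * Real.log (T u) ≤ α₀ * Real.log (T u) :=
          mul_le_mul_of_nonpos_right (min_le_left αp αm) (le_of_lt hlogTuneg')
        rw [habsTu]
        linarith
    -- h' u lower bound
    have huQmem : u ∈ Q := by
      refine ⟨⟨?_, ?_⟩, hulow⟩
      · linarith [(abs_le.1 huup).1]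
      · exact (abs_le.1 huup).2
    have hu'bound : ε₀ ≤ |h' u| := hQbound u huQmem
    have hu'abs_pos : 0 < |h' u| := lt_of_lt_of_le hε₀pos hu'bound
    -- |deriv f|
    have habs_deriv : |deriv f (h u)| = h' (T u) * lam * |h' u|⁻¹ := by
      rw [hderiv, abs_mul, abs_mul, abs_inv, hτabs, abs_of_pos hhTu_pos.1]
      ring
    have hlogD : Real.log |deriv f (h u)| =
        Real.log (h' (T u)) + Real.log lam - Real.log |h' u| := by
      rw [habs_deriv,
          Real.log_mul (mul_ne_zero (ne_of_gt hhTu_pos.1) (ne_of_gt hlam0))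
            (inv_ne_zero (ne_of_gt hu'abs_pos)),
          Real.log_mul (ne_of_gt hhTu_pos.1) (ne_of_gt hlam0), Real.log_inv]
      ring
    apply ENNReal.ofReal_le_ofReal
    have hεlog : Real.log ε₀ ≤ Real.log |h' u| := Real.log_le_log hε₀pos hu'bound
    have hfinal : α₀ * (-Real.log |T u|) - C₁ ≤ -(Real.log |deriv f (h u)|) := by
      rw [hlogD, hC₁_def]
      have := hhTu_pos.2
      linarith
    exact le_trans hfinal (le_max_right 0 _)
  -- measurability of the integrand
  have hg_meas : Measurable (fun x => ENNReal.ofReal (max 0 (-(Real.log |deriv f x|)))) := by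
    apply Measurable.ennreal_ofReal
    exact measurable_const.max ((Real.measurable_log.comp (measurable_deriv f).abs).neg)
  -- a.e. measurability of h
  have hclampIcc : ∀ x : ℝ, min 1 (max (-1) x) ∈ Set.Icc (-1:ℝ) 1 := by
    intro x
    constructor
    · exact le_min (by norm_num) (le_max_left _ _)
    · exact min_le_left _ _
  have hhcont : ContinuousOn h (Set.Icc (-1:ℝ) 1) :=
    fun x hx => (hhd x hx).continuousWithinAt
  have hclamp_cont : Continuous (fun x : ℝ => h (min 1 (max (-1) x))) := by
    apply hhcont.comp_continuous
    · exact continuous_const.min (continuous_const.max continuous_id)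
    · exact hclampIcc
  have hhae : AEMeasurable h μP := by
    refine ⟨fun x => h (min 1 (max (-1) x)), hclamp_cont.measurable, ?_⟩
    filter_upwards [haeIcc] with u hu
    have h1 : -1 ≤ u := by
      have := (abs_le.1 hu).1
      linarith [hlt2]
    have h2 : u ≤ 1 := by
      have := (abs_le.1 hu).2
      linarith [hlt2]
    rw [max_eq_right h1, min_eq_right h2]
  -- the Ψ function measurability
  have hΨmeas : Measurable (fun v : ℝ =>
      if |v| ≤ r then ENNReal.ofReal (α₀ * (-Real.log |v|) - C₁) else 0) := by
    apply Measurable.ite (measurableSet_le measurable_id.abs measurable_const)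
    · apply Measurable.ennreal_ofReal
      exact (((Real.measurable_log.comp measurable_abs).neg.const_mul α₀).sub measurable_const)
    · exact measurable_const
  -- psi divergence
  have hpsi := TentSetup.psi_top
    { lam := lam, T := T, c := c, s := s,
      hlam1 := hlam1, hlam2 := hlt2, hT := hT, hc0 := hc0, hcs := hcs,
      hs0 := hs0, hs1 := hs1, hsrec := hsrec, hcne := hcne,
      hsame := hsame', hopp := hopp', hdec := hdec' }
    μP hinvar hsupp hatom α₀ C₁ r hα₀pos hrpos
  -- assembly
  rw [MeasureTheory.lintegral_map' hg_meas.aemeasurable hhae]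
  refine top_le_iff.1 ?_
  have h3ae : ∀ᵐ u ∂μP, T u ≠ 0 := by
    have hnull : μP (T ⁻¹' {(0:ℝ)}) = 0 := by
      rw [← MeasureTheory.Measure.map_apply hTmeas (measurableSet_singleton 0), hinvar]
      exact hatom
    refine (MeasureTheory.ae_iff).2 ?_
    have : {u : ℝ | ¬ T u ≠ 0} = T ⁻¹' {(0:ℝ)} := by ext u; simp
    rw [this]
    exact hnull
  have h2ae : ∀ᵐ u ∂μP, u ≠ 0 := by
    refine (MeasureTheory.ae_iff).2 ?_
    have : {u : ℝ | ¬ u ≠ 0} = {(0:ℝ)} := by ext u; simp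
    rw [this]
    exact hatom
  calc (⊤:ℝ≥0∞) = ∫⁻ v, (if |v| ≤ r then ENNReal.ofReal (α₀ * (-Real.log |v|) - C₁) else 0) ∂μP :=
        hpsi.symm
  _ = ∫⁻ v, (if |v| ≤ r then ENNReal.ofReal (α₀ * (-Real.log |v|) - C₁) else 0)
        ∂(MeasureTheory.Measure.map T μP) := by rw [hinvar]
  _ = ∫⁻ u, (if |T u| ≤ r then ENNReal.ofReal (α₀ * (-Real.log |T u|) - C₁) else 0) ∂μP :=
        MeasureTheory.lintegral_map hΨmeas hTmeas
  _ ≤ ∫⁻ u, ENNReal.ofReal (max 0 (-(Real.log |deriv f (h u)|))) ∂μP := by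
        apply MeasureTheory.lintegral_mono_ae
        filter_upwards [haeIcc, h2ae, h3ae] with u hu1 hu2 hu3
        exact hkey u hu1 hu2 hu3
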